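/- Let $d \ge 2$, $2 \le s \le d$, and integers $0 \le r_{s-1} \le r_s \le \cdots \le r_d$ with $r_s \le 2r_{s-1} - 1$; set $\overline{r} = r_s - r_{s-1} + 1 \le r_{s-1}$. There is no polynomial $u$ in $x_1,\dots,x_d$ such that: (i) $\frac{\partial^{\overline{r}} u}{\partial x_s^{\overline{r}}}$ vanishes identically on the set $F_1 = \{x : x_i = 0 \text{ for } i \ne s-1, s+1, \dots, d;\ x_s = 0;\ x_{s-1}, x_{s+1}, \dots, x_d > 0,\ \sum x_i < 1\}$, and (ii) $\frac{\partial^{r_{s-1}} u}{\partial x_{s-1}^{r_{s-1}}}$ agrees on $F_2 = \{x : x_i = 0 \text{ for } i < s-1;\ x_{s-1} = 0;\ x_s < 0;\ x_{s+1},\dots,x_d > 0\}$ with $r_{s-1}! \, x_s^{\overline{r}} \prod_{i=s+1}^d x_i^{r_i - r_{i-1}} (1 - \sum_{i=s+1}^d x_i)^{r_d - r_s}$. -/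

import Mathlib

open MvPolynomial

private lemma mv_eq_zero : ∀ (n : ℕ) (p : MvPolynomial (Fin n) ℝ) (S : Fin n → Set ℝ),
    (∀ i, (S i).Infinite) →
    (∀ x : Fin n → ℝ, (∀ i, x i ∈ S i) → eval x p = 0) → p = 0 := by
  intro n
  induction n with
  | zero =>
      intro p S hS h
      obtain ⟨a, rfl⟩ := C_surjective (Fin 0) p
      have := h (fun i => i.elim0) (fun i => i.elim0)
      simpa using this
  | succ n ih =>
      intro p S hS h
      have key : finSuccEquiv ℝ n p = 0 := by
        apply Polynomial.ext
        intro k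
        rw [Polynomial.coeff_zero]
        apply ih _ (fun i => S i.succ) (fun i => hS _)
        intro x hx
        have hzero : (Polynomial.map (eval x) (finSuccEquiv ℝ n p)) = 0 := by
          apply Polynomial.eq_zero_of_infinite_isRoot
          apply (hS 0).mono
          intro y hy
          simp only [Set.mem_setOf_eq, Polynomial.IsRoot]
          rw [← eval_eq_eval_mv_eval']
          apply h
          intro i
          refine Fin.cases ?_ ?_ i
          · simpa using hy
          · intro j; simpa using hx j
        have := congrArg (fun q => Polynomial.coeff q k) hzero
        simpa [Polynomial.coeff_map] using this
      have := congrArg (finSuccEquiv ℝ n).symm key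
      simpa using this

private lemma coeff_pderiv' {d : ℕ} (i : Fin d) (p : MvPolynomial (Fin d) ℝ) (μ : Fin d →₀ ℕ) :
    coeff μ (pderiv i p) = ((μ i : ℝ) + 1) * coeff (μ + Finsupp.single i 1) p := by
  induction p using MvPolynomial.induction_on' with
  | add p q hp hq => simp [hp, hq, mul_add]
  | monomial m c =>
      rw [pderiv_monomial, coeff_monomial, coeff_monomial]
      by_cases h : m = μ + Finsupp.single i 1
      · subst h
        rw [if_pos (add_tsub_cancel_right _ _), if_pos rfl]
        simp only [Finsupp.add_apply, Finsupp.single_eq_same]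
        push_cast; ring
      · rw [if_neg h]
        by_cases h2 : m - Finsupp.single i 1 = μ
        · have hmi : m i = 0 := by
            by_contra hmi
            apply h
            have hext : ∀ k, μ k = m k - (Finsupp.single i 1) k := by
              intro k; rw [← h2, Finsupp.tsub_apply]
            ext k
            rw [Finsupp.add_apply, hext k]
            by_cases hk : i = k
            · subst hk; simp [Finsupp.single_apply]; omega
            · simp [Finsupp.single_apply, hk]
          rw [if_pos h2, hmi]; simp
        · rw [if_neg h2]; ring

private lemma coeff_pderiv_iterate {d : ℕ} (i : Fin d) (p : MvPolynomial (Fin d) ℝ) (k : ℕ) :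
    ∀ μ : Fin d →₀ ℕ, coeff μ ((fun q => pderiv i q)^[k] p)
      = ((μ i + k).descFactorial k : ℝ) * coeff (μ + Finsupp.single i k) p := by
  induction k with
  | zero => intro μ; simp
  | succ k ih =>
      intro μ
      rw [Function.iterate_succ_apply', coeff_pderiv', ih]
      simp only [Finsupp.add_apply, Finsupp.single_eq_same]
      have h2 : μ + Finsupp.single i 1 + Finsupp.single i k = μ + Finsupp.single i (k + 1) := by
        rw [add_assoc, ← Finsupp.single_add, add_comm 1 k]
      rw [h2]
      have h3 : (μ i + (k + 1)).descFactorial (k + 1)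
          = (μ i + 1) * ((μ i + 1 + k).descFactorial k) := by
        rw [Nat.descFactorial_succ]
        have e1 : μ i + (k + 1) - k = μ i + 1 := by omega
        have e2 : μ i + (k + 1) = μ i + 1 + k := by omega
        rw [e1, e2]
      rw [h3]; push_cast; ring

private lemma coeff_pderiv_iterate' {d : ℕ} (i : Fin d) (p : MvPolynomial (Fin d) ℝ) (k : ℕ)
    (μ : Fin d →₀ ℕ) (hμ : μ i = 0) :
    coeff μ ((fun q => pderiv i q)^[k] p)
      = (k.factorial : ℝ) * coeff (μ + Finsupp.single i k) p := by
  rw [coeff_pderiv_iterate, hμ, zero_add, Nat.descFactorial_self]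

private lemma coeff_kill {d : ℕ} (T : Fin d → Prop) [DecidablePred T]
    (p : MvPolynomial (Fin d) ℝ) (μ : Fin d →₀ ℕ) (hμ : ∀ j, T j → μ j = 0) :
    coeff μ (aeval (fun j => if T j then 0 else X j) p) = coeff μ p := by
  induction p using MvPolynomial.induction_on' with
  | add p q hp hq => rw [map_add, coeff_add, coeff_add, hp, hq]
  | monomial m c =>
      rw [aeval_monomial]
      by_cases hm : ∀ j, T j → m j = 0
      · have hprod : (m.prod fun j k => (if T j then (0 : MvPolynomial (Fin d) ℝ) else X j) ^ k)
            = monomial m (1 : ℝ) := by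
          rw [monomial_eq, map_one, one_mul]
          apply Finsupp.prod_congr
          intro j hj
          have hTj : ¬ T j := fun h => (Finsupp.mem_support_iff.mp hj) (hm j h)
          rw [if_neg hTj]
        rw [hprod, algebraMap_eq, C_mul_monomial, mul_one]
      · push_neg at hm
        obtain ⟨j, hTj, hmj⟩ := hm
        have hprod : (m.prod fun j k => (if T j then (0 : MvPolynomial (Fin d) ℝ) else X j) ^ k)
            = 0 := by
          apply Finset.prod_eq_zero (Finsupp.mem_support_iff.mpr hmj)
          show (if T j then (0 : MvPolynomial (Fin d) ℝ) else X j) ^ m j = 0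
          rw [if_pos hTj, zero_pow hmj]
        rw [hprod, mul_zero, coeff_zero, coeff_monomial, if_neg]
        intro h
        exact hmj (h ▸ hμ j hTj)

private lemma eval_aeval_kill {d : ℕ} (T : Fin d → Prop) [DecidablePred T] (x : Fin d → ℝ)
    (p : MvPolynomial (Fin d) ℝ) :
    eval x (aeval (fun j => if T j then (0 : MvPolynomial (Fin d) ℝ) else X j) p)
      = eval (fun j => if T j then 0 else x j) p := by
  induction p using MvPolynomial.induction_on with
  | C a => simp
  | add p q hp hq => rw [map_add, map_add, map_add, hp, hq]
  | mul_X p j hp =>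
      rw [map_mul, map_mul, aeval_X, hp, map_mul, eval_X]
      congr 1
      split <;> simp

private lemma prod_monomial' {d : ℕ} (t : Finset (Fin d)) (f : Fin d → (Fin d →₀ ℕ)) :
    (∏ j ∈ t, monomial (f j) (1 : ℝ)) = monomial (∑ j ∈ t, f j) 1 := by
  induction t using Finset.induction with
  | empty => simp [monomial_zero']
  | insert _ _ h ih => rw [Finset.prod_insert h, Finset.sum_insert h, ih, monomial_mul, one_mul]


/-- with `r_s ≤ 2 r_{s-1} - 1` and `r̄ = r_s - r_{s-1} + 1`, there is no
polynomial `u` whose derivative `∂^r̄/∂x_s^r̄` vanishes on the face `F₁` while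
`∂^{r_{s-1}}/∂x_{s-1}^{r_{s-1}}` matches the prescribed polynomial on the face `F₂`. -/
theorem stmt13 (d s : ℕ) (r : ℕ → ℕ) (hd : 2 ≤ d) (hs2 : 2 ≤ s) (hsd : s ≤ d)
    (hmono : ∀ i, s - 1 ≤ i → i < d → r i ≤ r (i + 1))
    (hrs : r s + 1 ≤ 2 * r (s - 1)) :
    ¬ ∃ u : MvPolynomial (Fin d) ℝ,
      (∀ x : Fin d → ℝ,
        (∀ j : Fin d, (j : ℕ) + 1 ≤ s → (j : ℕ) + 1 ≠ s - 1 → x j = 0) →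
        (∀ j : Fin d, ((j : ℕ) + 1 = s - 1 ∨ s < (j : ℕ) + 1) → 0 < x j) →
        (∑ j, x j < 1) →
        MvPolynomial.eval x
          ((fun p => MvPolynomial.pderiv (⟨s - 1, by omega⟩ : Fin d) p)^[r s - r (s - 1) + 1] u)
          = 0) ∧
      (∀ x : Fin d → ℝ,
        (∀ j : Fin d, (j : ℕ) + 1 < s → x j = 0) →
        (∀ j : Fin d, (j : ℕ) + 1 = s → x j < 0) →
        (∀ j : Fin d, s < (j : ℕ) + 1 → 0 < x j) →
        MvPolynomial.eval x
          ((fun p => MvPolynomial.pderiv (⟨s - 2, by omega⟩ : Fin d) p)^[r (s - 1)] u)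
          = ((r (s - 1)).factorial : ℝ) * x ⟨s - 1, by omega⟩ ^ (r s - r (s - 1) + 1) *
            (∏ j ∈ Finset.univ.filter (fun j : Fin d => s ≤ (j : ℕ)),
              x j ^ (r ((j : ℕ) + 1) - r (j : ℕ))) *
            (1 - ∑ j ∈ Finset.univ.filter (fun j : Fin d => s ≤ (j : ℕ)), x j)
              ^ (r d - r s)) := by
  classical
  rintro ⟨u, h1, h2⟩
  have hal : s - 1 < d := by omega
  have hbl : s - 2 < d := by omega
  have hd0 : (0:ℝ) < (d:ℝ) := by exact_mod_cast (by omega : 0 < d)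
  -- Claim 1 : the restricted r̄-th x_s-derivative is the zero polynomial
  have hq1 : (aeval (fun j : Fin d => if (j : ℕ) + 1 ≤ s ∧ (j : ℕ) + 1 ≠ s - 1 then (0 : MvPolynomial (Fin d) ℝ) else X j)
      ((fun p => pderiv (⟨s - 1, hal⟩ : Fin d) p)^[r s - r (s - 1) + 1] u)) = 0 := by
    apply mv_eq_zero d _
      (fun j : Fin d => if (j : ℕ) + 1 ≤ s ∧ (j : ℕ) + 1 ≠ s - 1 then Set.univ
        else Set.Ioo 0 (1/(2*(d:ℝ))))
    · intro i
      by_cases hc : (i : ℕ) + 1 ≤ s ∧ (i : ℕ) + 1 ≠ s - 1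
      · rw [if_pos hc]; exact Set.infinite_univ
      · rw [if_neg hc]; exact Set.Ioo_infinite (by positivity)
    · intro x hx
      rw [eval_aeval_kill]
      apply h1
      · intro j hj1 hj2
        exact if_pos ⟨hj1, hj2⟩
      · intro j hj
        have hc : ¬ ((j : ℕ) + 1 ≤ s ∧ (j : ℕ) + 1 ≠ s - 1) := by omega
        rw [if_neg hc]
        have hm := hx j
        rw [if_neg hc] at hm
        exact (Set.mem_Ioo.mp hm).1
      · have hlt : ∀ j : Fin d,
            (if (j : ℕ) + 1 ≤ s ∧ (j : ℕ) + 1 ≠ s - 1 then (0:ℝ) else x j) < 1/(2*(d:ℝ)) := by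
          intro j
          by_cases hc : (j : ℕ) + 1 ≤ s ∧ (j : ℕ) + 1 ≠ s - 1
          · rw [if_pos hc]; positivity
          · rw [if_neg hc]
            have hm := hx j
            rw [if_neg hc] at hm
            exact (Set.mem_Ioo.mp hm).2
        have hne : Nonempty (Fin d) := ⟨⟨0, by omega⟩⟩
        calc (∑ j : Fin d, if (j : ℕ) + 1 ≤ s ∧ (j : ℕ) + 1 ≠ s - 1 then (0:ℝ) else x j)
            < ∑ _j : Fin d, 1/(2*(d:ℝ)) :=
              Finset.sum_lt_sum_of_nonempty Finset.univ_nonempty (fun j _ => hlt j)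
          _ = d * (1/(2*(d:ℝ))) := by
              rw [Finset.sum_const, Finset.card_univ, Fintype.card_fin, nsmul_eq_mul]
          _ < 1 := by
              rw [mul_one_div, div_lt_one (by linarith)]
              linarith
  -- Claim 2 : the restricted r_{s-1}-th x_{s-1}-derivative is the prescribed polynomial
  have hq2 : (aeval (fun j : Fin d => if (j : ℕ) + 1 < s then (0 : MvPolynomial (Fin d) ℝ) else X j)
      ((fun p => pderiv (⟨s - 2, hbl⟩ : Fin d) p)^[r (s - 1)] u))
      = C ((r (s - 1)).factorial : ℝ) * X (⟨s - 1, hal⟩ : Fin d) ^ (r s - r (s - 1) + 1) *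
          (∏ j ∈ Finset.univ.filter (fun j : Fin d => s ≤ (j : ℕ)),
            X j ^ (r ((j : ℕ) + 1) - r (j : ℕ))) *
          (1 - ∑ j ∈ Finset.univ.filter (fun j : Fin d => s ≤ (j : ℕ)), X j) ^ (r d - r s) := by
    rw [← sub_eq_zero]
    apply mv_eq_zero d _
      (fun j : Fin d => if (j : ℕ) + 1 < s then Set.univ
        else if (j : ℕ) + 1 = s then Set.Iio 0 else Set.Ioi 0)
    · intro i
      by_cases hc : (i : ℕ) + 1 < s
      · rw [if_pos hc]; exact Set.infinite_univ
      · rw [if_neg hc]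
        by_cases hc2 : (i : ℕ) + 1 = s
        · rw [if_pos hc2]; exact Set.Iio_infinite 0
        · rw [if_neg hc2]; exact Set.Ioi_infinite 0
    · intro x hx
      rw [map_sub, sub_eq_zero, eval_aeval_kill]
      have c1 : ∀ j : Fin d, (j : ℕ) + 1 < s →
          (if (j : ℕ) + 1 < s then (0:ℝ) else x j) = 0 := fun j hj => if_pos hj
      have c2 : ∀ j : Fin d, (j : ℕ) + 1 = s →
          (if (j : ℕ) + 1 < s then (0:ℝ) else x j) < 0 := by
        intro j hj
        have hc : ¬ ((j : ℕ) + 1 < s) := by omega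
        rw [if_neg hc]
        have hm := hx j
        rw [if_neg hc, if_pos hj] at hm
        exact hm
      have c3 : ∀ j : Fin d, s < (j : ℕ) + 1 →
          (0:ℝ) < (if (j : ℕ) + 1 < s then (0:ℝ) else x j) := by
        intro j hj
        have hc : ¬ ((j : ℕ) + 1 < s) := by omega
        have hc2 : ¬ ((j : ℕ) + 1 = s) := by omega
        rw [if_neg hc]
        have hm := hx j
        rw [if_neg hc, if_neg hc2] at hm
        exact hm
      rw [h2 _ c1 c2 c3]
      simp only [map_mul, map_pow, map_prod, map_sub, map_sum, map_one, eval_C, eval_X]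
      have keyA : (if ((⟨s - 1, hal⟩ : Fin d) : ℕ) + 1 < s then (0:ℝ) else x ⟨s - 1, hal⟩)
          = x ⟨s - 1, hal⟩ := if_neg (by simp only [Fin.val_mk]; omega)
      have keyF : ∀ j ∈ Finset.univ.filter (fun j : Fin d => s ≤ (j : ℕ)),
          (if (j : ℕ) + 1 < s then (0:ℝ) else x j) = x j := by
        intro j hj
        have := (Finset.mem_filter.mp hj).2
        exact if_neg (by omega)
      rw [Finset.prod_congr rfl (fun j hj => by rw [keyF j hj]),
        Finset.sum_congr rfl (fun j hj => keyF j hj)]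
      simp only [keyA]
  -- extract the coefficient of the key monomial from both claims
  set μ1 : Fin d →₀ ℕ := Finsupp.equivFunOnFinite.symm
      (fun j : Fin d => if (j : ℕ) = s - 2 then r (s - 1)
        else if s ≤ (j : ℕ) then r ((j : ℕ) + 1) - r (j : ℕ) else 0) with hμ1def
  set μ2 : Fin d →₀ ℕ := Finsupp.equivFunOnFinite.symm
      (fun j : Fin d => if (j : ℕ) = s - 1 then r s - r (s - 1) + 1
        else if s ≤ (j : ℕ) then r ((j : ℕ) + 1) - r (j : ℕ) else 0) with hμ2def
  have hμ1app : ∀ j : Fin d, μ1 j = (if (j : ℕ) = s - 2 then r (s - 1)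
      else if s ≤ (j : ℕ) then r ((j : ℕ) + 1) - r (j : ℕ) else 0) := fun j => rfl
  have hμ2app : ∀ j : Fin d, μ2 j = (if (j : ℕ) = s - 1 then r s - r (s - 1) + 1
      else if s ≤ (j : ℕ) then r ((j : ℕ) + 1) - r (j : ℕ) else 0) := fun j => rfl
  -- the two shifted monomials agree
  have hm0 : μ2 + Finsupp.single (⟨s - 2, hbl⟩ : Fin d) (r (s - 1))
      = μ1 + Finsupp.single (⟨s - 1, hal⟩ : Fin d) (r s - r (s - 1) + 1) := by
    ext k
    simp only [Finsupp.add_apply, Finsupp.single_apply, hμ1app, hμ2app, Fin.ext_iff, Fin.val_mk]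
    split_ifs <;> omega
  -- coefficient from claim 1 : it is zero
  have hz : coeff (μ1 + Finsupp.single (⟨s - 1, hal⟩ : Fin d) (r s - r (s - 1) + 1)) u = 0 := by
    have hsupp : ∀ j : Fin d, ((j : ℕ) + 1 ≤ s ∧ (j : ℕ) + 1 ≠ s - 1) → μ1 j = 0 := by
      intro j hj
      rw [hμ1app]
      split_ifs <;> omega
    have hμ1a : μ1 (⟨s - 1, hal⟩ : Fin d) = 0 := by
      rw [hμ1app]
      simp only [Fin.val_mk]
      split_ifs <;> omega
    have := congrArg (coeff μ1) hq1
    rw [coeff_kill _ _ _ hsupp, coeff_zero,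
      coeff_pderiv_iterate' _ _ _ _ hμ1a] at this
    have hfac : ((r s - r (s - 1) + 1).factorial : ℝ) ≠ 0 :=
      Nat.cast_ne_zero.mpr (Nat.factorial_ne_zero _)
    exact (mul_eq_zero.mp this).resolve_left hfac
  -- coefficient from claim 2 : it is one
  have ho : ((r (s - 1)).factorial : ℝ)
      * coeff (μ2 + Finsupp.single (⟨s - 2, hbl⟩ : Fin d) (r (s - 1))) u
      = ((r (s - 1)).factorial : ℝ) := by
    have hsupp : ∀ j : Fin d, ((j : ℕ) + 1 < s) → μ2 j = 0 := by
      intro j hj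
      rw [hμ2app]
      split_ifs <;> omega
    have hμ2b : μ2 (⟨s - 2, hbl⟩ : Fin d) = 0 := by
      rw [hμ2app]
      simp only [Fin.val_mk]
      split_ifs <;> omega
    have hkey := congrArg (coeff μ2) hq2
    rw [coeff_kill _ _ _ hsupp, coeff_pderiv_iterate' _ _ _ _ hμ2b] at hkey
    -- now compute the coefficient of the right-hand side
    have hmono2 : (C ((r (s - 1)).factorial : ℝ) * X (⟨s - 1, hal⟩ : Fin d) ^ (r s - r (s - 1) + 1) *
          (∏ j ∈ Finset.univ.filter (fun j : Fin d => s ≤ (j : ℕ)),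
            X j ^ (r ((j : ℕ) + 1) - r (j : ℕ))) : MvPolynomial (Fin d) ℝ)
        = monomial μ2 ((r (s - 1)).factorial : ℝ) := by
      rw [X_pow_eq_monomial,
        show (∏ j ∈ Finset.univ.filter (fun j : Fin d => s ≤ (j : ℕ)),
            (X j ^ (r ((j : ℕ) + 1) - r (j : ℕ)) : MvPolynomial (Fin d) ℝ))
          = ∏ j ∈ Finset.univ.filter (fun j : Fin d => s ≤ (j : ℕ)),
              monomial (Finsupp.single j (r ((j : ℕ) + 1) - r (j : ℕ))) (1:ℝ) from
          Finset.prod_congr rfl (fun j _ => X_pow_eq_monomial),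
        prod_monomial', mul_assoc, monomial_mul, one_mul, C_mul_monomial, mul_one]
      have hnu : ((Finsupp.single (⟨s - 1, hal⟩ : Fin d) (r s - r (s - 1) + 1)) +
          ∑ j ∈ Finset.univ.filter (fun j : Fin d => s ≤ (j : ℕ)),
            Finsupp.single j (r ((j : ℕ) + 1) - r (j : ℕ))) = μ2 := by
        ext k
        simp only [Finsupp.add_apply, Finsupp.finset_sum_apply, Finsupp.single_apply]
        rw [Finset.sum_ite_eq']
        simp only [Finset.mem_filter, Finset.mem_univ, true_and, hμ2app, Fin.ext_iff, Fin.val_mk]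
        split_ifs <;> omega
      rw [hnu]
    rw [hmono2] at hkey
    have hcm := coeff_monomial_mul (0 : Fin d →₀ ℕ) μ2 ((r (s - 1)).factorial : ℝ)
      ((1 - ∑ j ∈ Finset.univ.filter (fun j : Fin d => s ≤ (j : ℕ)), X j) ^ (r d - r s) :
        MvPolynomial (Fin d) ℝ)
    rw [add_zero] at hcm
    rw [hcm] at hkey
    have hconst : coeff (0 : Fin d →₀ ℕ)
        ((1 - ∑ j ∈ Finset.univ.filter (fun j : Fin d => s ≤ (j : ℕ)), X j) ^ (r d - r s) :
          MvPolynomial (Fin d) ℝ) = 1 := by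
      rw [← congrFun (constantCoeff_eq (R := ℝ) (σ := Fin d)) _]
      simp [map_pow, map_sub, map_sum]
    rw [hconst, mul_one] at hkey
    exact hkey
  rw [hm0, hz, mul_zero] at ho
  exact (Nat.cast_ne_zero.mpr (Nat.factorial_ne_zero (r (s - 1)))) ho.symm
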